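/- Let n ≥ 6 and let I = {π ∈ S_n : π({1,2,3}) = {1,2,3} or π({1,2,3}) ∩ {1,2,3} = ∅}. Then I contains no 2-coset; that is, for all distinct α₁, α₂ ∈ {1,…,n} and distinct β₁, β₂ ∈ {1,…,n}, the set T = {π ∈ S_n : π(α₁) = β₁ and π(α₂) = β₂} is not a subset of I. -/

import Mathlib

private lemma aux_img {n : ℕ} (π : Equiv.Perm (Fin n)) (u v : Fin n)
    (S : Finset (Fin n)) (hu : u ∈ S) (hv : v ∉ S) :
    Finset.image (⇑(π * Equiv.swap u v)) S
      = insert (π v) (Finset.image ⇑π (S.erase u)) := by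
  conv_lhs => rw [← Finset.insert_erase hu]
  rw [Finset.image_insert]
  have h1 : (π * Equiv.swap u v) u = π v := by
    simp [Equiv.Perm.mul_apply]
  rw [h1]
  congr 1
  apply Finset.image_congr
  intro x hx
  rw [Finset.mem_coe, Finset.mem_erase] at hx
  have hxv : x ≠ v := fun e => hv (e ▸ hx.2)
  simp [Equiv.Perm.mul_apply, Equiv.swap_apply_of_ne_of_ne hx.1 hxv]

theorem stmt2 (n : ℕ) (hn : 6 ≤ n)
    (a b c : Fin n) (ha : (a : ℕ) = 0) (hb : (b : ℕ) = 1) (hc : (c : ℕ) = 2)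
    (α₁ α₂ β₁ β₂ : Fin n) (hα : α₁ ≠ α₂) (hβ : β₁ ≠ β₂) :
    ¬ ({π : Equiv.Perm (Fin n) | π α₁ = β₁ ∧ π α₂ = β₂} ⊆
        {π : Equiv.Perm (Fin n) |
          Finset.image ⇑π {a, b, c} = ({a, b, c} : Finset (Fin n)) ∨
          Finset.image ⇑π {a, b, c} ∩ ({a, b, c} : Finset (Fin n)) = ∅}) := by
  intro h
  have hab : a ≠ b := by intro e; rw [e, hb] at ha; omega
  have hac : a ≠ c := by intro e; rw [e, hc] at ha; omega
  have hbc : b ≠ c := by intro e; rw [e, hc] at hb; omega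
  set S : Finset (Fin n) := {a, b, c} with hS
  have hcardS : S.card = 3 := by
    rw [hS, Finset.card_insert_of_notMem (by simp [hab, hac]),
      Finset.card_insert_of_notMem (by simp [hbc]), Finset.card_singleton]
  -- existence of u ∈ S \ {α₁, α₂}
  have hu' : (S \ ({α₁, α₂} : Finset (Fin n))).Nonempty := by
    rw [← Finset.card_pos]
    have h2 : ({α₁, α₂} : Finset (Fin n)).card ≤ 2 :=
      (Finset.card_insert_le _ _).trans (by simp)
    have := Finset.le_card_sdiff ({α₁, α₂} : Finset (Fin n)) S
    omega
  obtain ⟨u, hu⟩ := hu'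
  rw [Finset.mem_sdiff] at hu
  have huα₁ : u ≠ α₁ := fun e => hu.2 (by simp [e])
  have huα₂ : u ≠ α₂ := fun e => hu.2 (by simp [e])
  -- a permutation π₀ in T
  set f := Equiv.swap α₁ β₁ with hf
  have hfα₂ : f α₂ ≠ β₁ := by
    intro e
    exact hα (f.injective (e.trans (Equiv.swap_apply_left α₁ β₁).symm)).symm
  set π₀ := Equiv.swap (f α₂) β₂ * f with hπ₀
  have hπ₀1 : π₀ α₁ = β₁ := by
    rw [hπ₀, Equiv.Perm.mul_apply, hf, Equiv.swap_apply_left,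
      Equiv.swap_apply_of_ne_of_ne (Ne.symm hfα₂) hβ]
  have hπ₀2 : π₀ α₂ = β₂ := by
    rw [hπ₀, Equiv.Perm.mul_apply, Equiv.swap_apply_left]
  -- helper: a second element of S distinct from u
  have hSu : (S.erase u).Nonempty := by
    rw [← Finset.card_pos, Finset.card_erase_of_mem hu.1]; omega
  obtain ⟨u', hu'mem⟩ := hSu
  have hu'S : u' ∈ S := Finset.mem_of_mem_erase hu'mem
  rcases h ⟨hπ₀1, hπ₀2⟩ with himg | hdisj
  · -- case 1 : π₀ '' S = S; pick v outside S ∪ {α₁, α₂}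
    have hv' : ((insert α₁ (insert α₂ S))ᶜ : Finset (Fin n)).Nonempty := by
      rw [← Finset.card_pos, Finset.card_compl]
      have h1 : (insert α₁ (insert α₂ S)).card ≤ 5 := by
        calc (insert α₁ (insert α₂ S)).card ≤ (insert α₂ S).card + 1 :=
              Finset.card_insert_le _ _
          _ ≤ S.card + 1 + 1 := by have := Finset.card_insert_le α₂ S; omega
          _ = 5 := by omega
      have h2 : Fintype.card (Fin n) = n := Fintype.card_fin n
      omega
    obtain ⟨v, hv⟩ := hv'
    rw [Finset.mem_compl] at hv
    have hvα₁ : v ≠ α₁ := fun e => hv (by simp [e])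
    have hvα₂ : v ≠ α₂ := fun e => hv (by simp [e])
    have hvS : v ∉ S := fun e => hv (by simp [e])
    set π' := π₀ * Equiv.swap u v with hπ'
    have hT : π' ∈ {π : Equiv.Perm (Fin n) | π α₁ = β₁ ∧ π α₂ = β₂} := by
      constructor
      · rw [hπ', Equiv.Perm.mul_apply,
          Equiv.swap_apply_of_ne_of_ne (Ne.symm huα₁) (Ne.symm hvα₁), hπ₀1]
      · rw [hπ', Equiv.Perm.mul_apply,
          Equiv.swap_apply_of_ne_of_ne (Ne.symm huα₂) (Ne.symm hvα₂), hπ₀2]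
    have himg' : Finset.image (⇑π') S = insert (π₀ v) (Finset.image ⇑π₀ (S.erase u)) :=
      aux_img π₀ u v S hu.1 hvS
    have hπ₀vS : π₀ v ∉ S := by
      intro hmem
      rw [← himg, Finset.mem_image] at hmem
      obtain ⟨s, hsS, hs⟩ := hmem
      exact hvS (π₀.injective hs ▸ hsS)
    rcases h hT with hA | hB
    · rw [himg'] at hA
      exact hπ₀vS (hA ▸ Finset.mem_insert_self _ _)
    · have h1 : π₀ u' ∈ Finset.image (⇑π') S := by
        rw [himg']
        exact Finset.mem_insert_of_mem (Finset.mem_image_of_mem _ hu'mem)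
      have h2 : π₀ u' ∈ S := himg ▸ Finset.mem_image_of_mem _ hu'S
      have : π₀ u' ∈ Finset.image (⇑π') S ∩ S := Finset.mem_inter.mpr ⟨h1, h2⟩
      rw [hB] at this
      exact absurd this (Finset.notMem_empty _)
  · -- case 2 : π₀ '' S ∩ S = ∅
    have hdisj' : ∀ x ∈ S, π₀ x ∉ S := by
      intro x hx hmem
      have : π₀ x ∈ Finset.image (⇑π₀) S ∩ S :=
        Finset.mem_inter.mpr ⟨Finset.mem_image_of_mem _ hx, hmem⟩
      rw [hdisj] at this
      exact absurd this (Finset.notMem_empty _)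
    -- pick w ∈ S not in π₀ '' {α₁, α₂}
    have hw' : (S \ Finset.image ⇑π₀ ({α₁, α₂} : Finset (Fin n))).Nonempty := by
      rw [← Finset.card_pos]
      have h1 : (Finset.image ⇑π₀ ({α₁, α₂} : Finset (Fin n))).card ≤ 2 :=
        (Finset.card_image_le).trans
          ((Finset.card_insert_le _ _).trans (by simp))
      have := Finset.le_card_sdiff (Finset.image ⇑π₀ ({α₁, α₂} : Finset (Fin n))) S
      omega
    obtain ⟨w, hw⟩ := hw'
    rw [Finset.mem_sdiff] at hw
    set v := π₀⁻¹ w with hvdef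
    have hπ₀v : π₀ v = w := π₀.apply_symm_apply w
    have hvα₁ : v ≠ α₁ := by
      intro e
      exact hw.2 (Finset.mem_image.mpr ⟨α₁, by simp, by rw [← e, hπ₀v]⟩)
    have hvα₂ : v ≠ α₂ := by
      intro e
      exact hw.2 (Finset.mem_image.mpr ⟨α₂, by simp, by rw [← e, hπ₀v]⟩)
    have hvS : v ∉ S := fun hmem => hdisj' v hmem (hπ₀v ▸ hw.1)
    set π' := π₀ * Equiv.swap u v with hπ'
    have hT : π' ∈ {π : Equiv.Perm (Fin n) | π α₁ = β₁ ∧ π α₂ = β₂} := by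
      constructor
      · rw [hπ', Equiv.Perm.mul_apply,
          Equiv.swap_apply_of_ne_of_ne (Ne.symm huα₁) (Ne.symm hvα₁), hπ₀1]
      · rw [hπ', Equiv.Perm.mul_apply,
          Equiv.swap_apply_of_ne_of_ne (Ne.symm huα₂) (Ne.symm hvα₂), hπ₀2]
    have himg' : Finset.image (⇑π') S = insert (π₀ v) (Finset.image ⇑π₀ (S.erase u)) :=
      aux_img π₀ u v S hu.1 hvS
    rcases h hT with hA | hB
    · -- image π' S = S, but π₀ u' ∈ image π' S while π₀ u' ∉ S
      have h1 : π₀ u' ∈ Finset.image (⇑π') S := by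
        rw [himg']
        exact Finset.mem_insert_of_mem (Finset.mem_image_of_mem _ hu'mem)
      rw [hA] at h1
      exact hdisj' u' hu'S h1
    · have h1 : w ∈ Finset.image (⇑π') S := by
        rw [himg', ← hπ₀v]
        exact Finset.mem_insert_self _ _
      have : w ∈ Finset.image (⇑π') S ∩ S := Finset.mem_inter.mpr ⟨h1, hw.1⟩
      rw [hB] at this
      exact absurd this (Finset.notMem_empty _)
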